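/- Let q_1, q_2, q_3, r_{1,2}, r_{1,1}, c ∈ ℝ with q_3 ≠ 0 and r_{1,2} ≠ 0, let ε_1 ∈ ℝ \ {0}, define f(δ) := q_1 δ / (q_2 δ + q_3) and 𝒥_1(e) := r_{1,2} e² + r_{1,1} e + c, and let Δ ⊆ { δ ∈ ℝ : q_2 δ + q_3 ≠ 0 } be any subset. Define the set of attainable values Ω := { J ∈ ℝ : there exists δ* ∈ Δ with 𝒥_1(f(δ*)) = J and ε_1 · (d/dδ)[𝒥_1(f(δ))]|_{δ=δ*} < 0 }. Then: (a) if ε_1 r_{1,2} q_1 q_3 > 0, then Ω = 𝒥_1( (−∞, −r_{1,1}/(2 r_{1,2})) ∩ f(Δ) ); and (b) if ε_1 r_{1,2} q_1 q_3 < 0, then Ω = 𝒥_1( (−r_{1,1}/(2 r_{1,2}), ∞) ∩ f(Δ) ), where 𝒥_1(E) and f(Δ) denote images of sets. -/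

import Mathlib

lemma stmt6_samesign {A B P : ℝ} (h : 0 < A * B) : (A * P < 0 ↔ B * P < 0) := by
  rcases mul_pos_iff.mp h with ⟨hA, hB⟩ | ⟨hA, hB⟩
  · constructor
    · intro hp
      have hP : P < 0 := by nlinarith
      exact mul_neg_of_pos_of_neg hB hP
    · intro hp
      have hP : P < 0 := by nlinarith
      exact mul_neg_of_pos_of_neg hA hP
  · constructor
    · intro hp
      have hP : 0 < P := by nlinarith
      exact mul_neg_of_neg_of_pos hB hP
    · intro hp
      have hP : 0 < P := by nlinarith
      exact mul_neg_of_neg_of_pos hA hP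

lemma stmt6_oppsign {A B P : ℝ} (h : A * B < 0) : (A * P < 0 ↔ 0 < B * P) := by
  rcases mul_neg_iff.mp h with ⟨hA, hB⟩ | ⟨hA, hB⟩
  · constructor
    · intro hp
      have hP : P < 0 := by nlinarith
      exact mul_pos_of_neg_of_neg hB hP
    · intro hp
      have hP : P < 0 := by nlinarith
      exact mul_neg_of_pos_of_neg hA hP
  · constructor
    · intro hp
      have hP : 0 < P := by nlinarith
      exact mul_pos hB hP
    · intro hp
      have hP : 0 < P := by nlinarith
      exact mul_neg_of_neg_of_pos hA hP

theorem stmt6 (q1 q2 q3 r12 r11 c : ℝ) (hq3 : q3 ≠ 0) (hr12 : r12 ≠ 0)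
    (ε1 : ℝ) (hε1 : ε1 ≠ 0)
    (f : ℝ → ℝ) (hf : f = fun δ => q1 * δ / (q2 * δ + q3))
    (𝒥 : ℝ → ℝ) (h𝒥 : 𝒥 = fun e => r12 * e^2 + r11 * e + c)
    (Δ : Set ℝ) (hΔ : Δ ⊆ {δ : ℝ | q2 * δ + q3 ≠ 0})
    (Ω : Set ℝ)
    (hΩ : Ω = {J : ℝ | ∃ δstar ∈ Δ, 𝒥 (f δstar) = J ∧
        ε1 * deriv (fun δ => 𝒥 (f δ)) δstar < 0}) :
    (ε1 * r12 * q1 * q3 > 0 →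
      Ω = 𝒥 '' (Set.Iio (-(r11 / (2 * r12))) ∩ f '' Δ)) ∧
    (ε1 * r12 * q1 * q3 < 0 →
      Ω = 𝒥 '' (Set.Ioi (-(r11 / (2 * r12))) ∩ f '' Δ)) := by
  have hr12sq : (0:ℝ) < 2 * r12 ^ 2 := by positivity
  -- derivative computation
  have hderiv : ∀ δ : ℝ, q2 * δ + q3 ≠ 0 →
      deriv (fun δ => 𝒥 (f δ)) δ
        = (2 * r12 * f δ + r11) * (q1 * q3 / (q2 * δ + q3) ^ 2) := by
    intro δ hd
    have hf' : HasDerivAt f (q1 * q3 / (q2 * δ + q3) ^ 2) δ := by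
      rw [hf]
      have h1 : HasDerivAt (fun x : ℝ => q1 * x) q1 δ := by
        simpa using (hasDerivAt_id δ).const_mul q1
      have h2 : HasDerivAt (fun x : ℝ => q2 * x + q3) q2 δ := by
        simpa using ((hasDerivAt_id δ).const_mul q2).add_const q3
      have := h1.div h2 hd
      refine this.congr_deriv ?_
      field_simp
      ring
    have h𝒥' : HasDerivAt 𝒥 (2 * r12 * f δ + r11) (f δ) := by
      rw [h𝒥]
      have h1 : HasDerivAt (fun e : ℝ => r12 * e ^ 2 + r11 * e)
          (r12 * (↑2 * f δ ^ 1) + r11 * 1) (f δ) := by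
        exact ((hasDerivAt_pow 2 (f δ)).const_mul r12).add
          ((hasDerivAt_id (f δ)).const_mul r11)
      have h2 := h1.add_const c
      refine h2.congr_deriv ?_
      push_cast
      ring
    exact (h𝒥'.comp δ hf').deriv
  -- the key sign equivalence
  have hiff : ∀ δ ∈ Δ,
      (ε1 * deriv (fun δ => 𝒥 (f δ)) δ < 0 ↔
        (ε1 * q1 * q3) * (2 * r12 * f δ + r11) < 0) := by
    intro δ hδ
    have hd : q2 * δ + q3 ≠ 0 := hΔ hδ
    have hd2 : (0:ℝ) < (q2 * δ + q3) ^ 2 := by positivity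
    rw [hderiv δ hd]
    have heq : ε1 * ((2 * r12 * f δ + r11) * (q1 * q3 / (q2 * δ + q3) ^ 2))
        = ((ε1 * q1 * q3) * (2 * r12 * f δ + r11)) / (q2 * δ + q3) ^ 2 := by
      field_simp
    rw [heq, div_lt_iff₀ hd2, zero_mul]
  -- linear sign equivalences
  have hlin : ∀ e : ℝ,
      (r12 * (2 * r12 * e + r11) < 0 ↔ e < -(r11 / (2 * r12))) := by
    intro e
    have heq : r12 * (2 * r12 * e + r11)
        = (e - (-(r11 / (2 * r12)))) * (2 * r12 ^ 2) := by
      field_simp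
      ring
    rw [heq]
    constructor
    · intro h
      nlinarith
    · intro h
      exact mul_neg_of_neg_of_pos (sub_neg.mpr h) hr12sq
  have hlin' : ∀ e : ℝ,
      (0 < r12 * (2 * r12 * e + r11) ↔ -(r11 / (2 * r12)) < e) := by
    intro e
    have heq : r12 * (2 * r12 * e + r11)
        = (e - (-(r11 / (2 * r12)))) * (2 * r12 ^ 2) := by
      field_simp
      ring
    rw [heq]
    constructor
    · intro h
      nlinarith
    · intro h
      exact mul_pos (sub_pos.mpr h) hr12sq
  constructor
  · intro hK
    have hAB : 0 < (ε1 * q1 * q3) * r12 := by nlinarith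
    ext J
    rw [hΩ]
    simp only [Set.mem_setOf_eq, Set.mem_image, Set.mem_inter_iff, Set.mem_Iio]
    constructor
    · rintro ⟨δ, hδ, hJ, hcond⟩
      rw [hiff δ hδ, stmt6_samesign hAB, hlin] at hcond
      exact ⟨f δ, ⟨hcond, δ, hδ, rfl⟩, hJ⟩
    · rintro ⟨e, ⟨he, δ, hδ, rfl⟩, hJ⟩
      refine ⟨δ, hδ, hJ, ?_⟩
      rw [hiff δ hδ, stmt6_samesign hAB, hlin]
      exact he
  · intro hK
    have hAB : (ε1 * q1 * q3) * r12 < 0 := by nlinarith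
    ext J
    rw [hΩ]
    simp only [Set.mem_setOf_eq, Set.mem_image, Set.mem_inter_iff, Set.mem_Ioi]
    constructor
    · rintro ⟨δ, hδ, hJ, hcond⟩
      rw [hiff δ hδ, stmt6_oppsign hAB, hlin'] at hcond
      exact ⟨f δ, ⟨hcond, δ, hδ, rfl⟩, hJ⟩
    · rintro ⟨e, ⟨he, δ, hδ, rfl⟩, hJ⟩
      refine ⟨δ, hδ, hJ, ?_⟩
      rw [hiff δ hδ, stmt6_oppsign hAB, hlin']
      exact he
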